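/- Fermat–Torricelli / Vecten–Fasbender weak duality: for any triangle with vertices A, B, C in the plane, any point X, and any equilateral triangle circumscribed about triangle ABC (i.e., whose three sides pass through A, B, C respectively), the height of the equilateral triangle is at most |AX| + |BX| + |CX|. -/

import Mathlib

open Metric

private lemma esq (v : EuclideanSpace ℝ (Fin 2)) : ‖v‖ ^ 2 = v 0 ^ 2 + v 1 ^ 2 := by
  rw [EuclideanSpace.norm_eq, Real.sq_sqrt (by positivity)]
  simp [Fin.sum_univ_two, sq_abs]

private lemma cs (u v : EuclideanSpace ℝ (Fin 2)) :
    |u 0 * v 1 - u 1 * v 0| ≤ ‖u‖ * ‖v‖ := by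
  have h1 := esq u; have h2 := esq v
  have hu := norm_nonneg u; have hv := norm_nonneg v
  rw [abs_le]
  constructor <;>
    nlinarith [sq_nonneg (u 0 * v 0 + u 1 * v 1), mul_nonneg hu hv,
      sq_nonneg (‖u‖ * ‖v‖ + (u 0 * v 1 - u 1 * v 0)),
      sq_nonneg (‖u‖ * ‖v‖ - (u 0 * v 1 - u 1 * v 0))]

theorem fermat_torricelli_weak_duality
    (A B C X V₁ V₂ V₃ : EuclideanSpace ℝ (Fin 2))
    (hside : 0 < dist V₁ V₂)
    (h12 : dist V₁ V₂ = dist V₂ V₃) (h23 : dist V₂ V₃ = dist V₃ V₁)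
    (hA : A ∈ affineSpan ℝ ({V₂, V₃} : Set (EuclideanSpace ℝ (Fin 2))))
    (hB : B ∈ affineSpan ℝ ({V₃, V₁} : Set (EuclideanSpace ℝ (Fin 2))))
    (hC : C ∈ affineSpan ℝ ({V₁, V₂} : Set (EuclideanSpace ℝ (Fin 2))))
    (hAin : A ∈ convexHull ℝ ({V₁, V₂, V₃} : Set (EuclideanSpace ℝ (Fin 2))))
    (hBin : B ∈ convexHull ℝ ({V₁, V₂, V₃} : Set (EuclideanSpace ℝ (Fin 2))))
    (hCin : C ∈ convexHull ℝ ({V₁, V₂, V₃} : Set (EuclideanSpace ℝ (Fin 2)))) :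
    infDist V₁ (affineSpan ℝ ({V₂, V₃} : Set (EuclideanSpace ℝ (Fin 2))))
      ≤ dist A X + dist B X + dist C X := by
  -- coordinates of A, B, C on the three side lines
  rw [← vsub_vadd A V₂] at hA
  obtain ⟨a, ha⟩ := vadd_left_mem_affineSpan_pair.mp hA
  rw [← vsub_vadd B V₃] at hB
  obtain ⟨b, hb⟩ := vadd_left_mem_affineSpan_pair.mp hB
  rw [← vsub_vadd C V₁] at hC
  obtain ⟨c, hc⟩ := vadd_left_mem_affineSpan_pair.mp hC
  have ha0 := congrArg (fun v => v 0) ha; have ha1 := congrArg (fun v => v 1) ha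
  have hb0 := congrArg (fun v => v 0) hb; have hb1 := congrArg (fun v => v 1) hb
  have hc0 := congrArg (fun v => v 0) hc; have hc1 := congrArg (fun v => v 1) hc
  simp only [vsub_eq_sub, PiLp.smul_apply, PiLp.sub_apply, smul_eq_mul]
    at ha0 ha1 hb0 hb1 hc0 hc1
  have hA0 : A 0 = V₂ 0 + a * (V₃ 0 - V₂ 0) := by linarith
  have hA1 : A 1 = V₂ 1 + a * (V₃ 1 - V₂ 1) := by linarith
  have hB0 : B 0 = V₃ 0 + b * (V₁ 0 - V₃ 0) := by linarith
  have hB1 : B 1 = V₃ 1 + b * (V₁ 1 - V₃ 1) := by linarith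
  have hC0 : C 0 = V₁ 0 + c * (V₂ 0 - V₁ 0) := by linarith
  have hC1 : C 1 = V₁ 1 + c * (V₂ 1 - V₁ 1) := by linarith
  set s := dist V₁ V₂ with hs
  -- side lengths
  have hn1 : ‖V₃ - V₂‖ = s := by rw [← dist_eq_norm, dist_comm, ← h12]
  have hn2 : ‖V₁ - V₃‖ = s := by rw [← dist_eq_norm, dist_comm, ← h23, ← h12]
  have hn3 : ‖V₂ - V₁‖ = s := by rw [← dist_eq_norm, dist_comm]
  have he1 : (V₃ 0 - V₂ 0) ^ 2 + (V₃ 1 - V₂ 1) ^ 2 = s ^ 2 := by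
    have := esq (V₃ - V₂); rw [hn1] at this
    simpa [PiLp.sub_apply] using this.symm
  have hspos : 0 < s := hside
  have hpq : 0 < (V₃ 0 - V₂ 0) ^ 2 + (V₃ 1 - V₂ 1) ^ 2 := by rw [he1]; positivity
  set K : ℝ := (V₃ 0 - V₂ 0) * (V₁ 1 - V₃ 1) - (V₃ 1 - V₂ 1) * (V₁ 0 - V₃ 0) with hK
  -- the three Cauchy–Schwarz bounds
  have key1 : |(V₃ 0 - V₂ 0) * (X 1 - A 1) - (V₃ 1 - V₂ 1) * (X 0 - A 0)| ≤ s * dist A X := by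
    have h := cs (V₃ - V₂) (X - A)
    rw [hn1, show ‖X - A‖ = dist A X by rw [← dist_eq_norm, dist_comm]] at h
    simpa [PiLp.sub_apply] using h
  have key2 : |(V₁ 0 - V₃ 0) * (X 1 - B 1) - (V₁ 1 - V₃ 1) * (X 0 - B 0)| ≤ s * dist B X := by
    have h := cs (V₁ - V₃) (X - B)
    rw [hn2, show ‖X - B‖ = dist B X by rw [← dist_eq_norm, dist_comm]] at h
    simpa [PiLp.sub_apply] using h
  have key3 : |(V₂ 0 - V₁ 0) * (X 1 - C 1) - (V₂ 1 - V₁ 1) * (X 0 - C 0)| ≤ s * dist C X := by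
    have h := cs (V₂ - V₁) (X - C)
    rw [hn3, show ‖X - C‖ = dist C X by rw [← dist_eq_norm, dist_comm]] at h
    simpa [PiLp.sub_apply] using h
  -- the sum of signed cross terms is the constant K
  have hsum : ((V₃ 0 - V₂ 0) * (X 1 - A 1) - (V₃ 1 - V₂ 1) * (X 0 - A 0))
      + ((V₁ 0 - V₃ 0) * (X 1 - B 1) - (V₁ 1 - V₃ 1) * (X 0 - B 0))
      + ((V₂ 0 - V₁ 0) * (X 1 - C 1) - (V₂ 1 - V₁ 1) * (X 0 - C 0)) = K := by
    rw [hA0, hA1, hB0, hB1, hC0, hC1, hK]; ring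
  have hKle : |K| ≤ s * (dist A X + dist B X + dist C X) := by
    rw [← hsum]
    calc |_ + _ + _| ≤ _ := (abs_add_three _ _ _)
    _ ≤ s * dist A X + s * dist B X + s * dist C X := by
        exact add_le_add (add_le_add key1 key2) key3
    _ = s * (dist A X + dist B X + dist C X) := by ring
  -- foot of the perpendicular from V₁ to the line V₂V₃
  set t : ℝ := ((V₁ 0 - V₂ 0) * (V₃ 0 - V₂ 0) + (V₁ 1 - V₂ 1) * (V₃ 1 - V₂ 1))
      / ((V₃ 0 - V₂ 0) ^ 2 + (V₃ 1 - V₂ 1) ^ 2) with ht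
  set Q : EuclideanSpace ℝ (Fin 2) := t • (V₃ -ᵥ V₂) +ᵥ V₂ with hQ
  have hQmem : Q ∈ affineSpan ℝ ({V₂, V₃} : Set (EuclideanSpace ℝ (Fin 2))) :=
    smul_vsub_vadd_mem_affineSpan_pair t V₂ V₃
  have hdQ : dist V₁ Q = |K| / s := by
    have hsq : ‖V₁ - Q‖ ^ 2 = (|K| / s) ^ 2 := by
      rw [esq, div_pow, sq_abs]
      have hQ0 : Q 0 = t * (V₃ 0 - V₂ 0) + V₂ 0 := rfl
      have hQ1 : Q 1 = t * (V₃ 1 - V₂ 1) + V₂ 1 := rfl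
      simp only [PiLp.sub_apply, hQ0, hQ1, ht, hK]
      rw [← he1]
      field_simp
      ring
    have h1 : ‖V₁ - Q‖ = |K| / s := by
      have hnn : (0:ℝ) ≤ |K| / s := div_nonneg (abs_nonneg K) hspos.le
      calc ‖V₁ - Q‖ = Real.sqrt (‖V₁ - Q‖ ^ 2) := (Real.sqrt_sq (norm_nonneg _)).symm
        _ = |K| / s := by rw [hsq, Real.sqrt_sq hnn]
    rw [dist_eq_norm, h1]
  calc infDist V₁ (affineSpan ℝ ({V₂, V₃} : Set (EuclideanSpace ℝ (Fin 2))))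
      ≤ dist V₁ Q := infDist_le_dist_of_mem hQmem
    _ = |K| / s := hdQ
    _ ≤ dist A X + dist B X + dist C X := by
        rw [div_le_iff₀ hspos]
        linarith [hKle]
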